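/- Let B be a nonnegative integrable real-valued random variable on a probability space, let λ > 0, and set ρ = λ·E[B]. Suppose r : ℕ → ℝ satisfies r 0 = 1, r n ≥ 0 for all n, and r (n+1) ≤ 1 − E[exp(−λ · (r n) · B)] for all n. Then r n ≤ ρ^n for all n ≥ 0. -/

import Mathlib

open MeasureTheory Real

/-- Theorem 3.3 (core bound): if `r 0 = 1`, `r n ≥ 0` and
`r (n+1) ≤ 1 - E[exp (-λ (r n) B)]`, then `r n ≤ ρ ^ n` with `ρ = λ E[B]`. -/
theorem maxQueue_exceedance_le_rho_pow
    {Ω : Type*} [MeasureSpace Ω] [IsProbabilityMeasure (volume : Measure Ω)]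
    (B : Ω → ℝ) (hBint : Integrable B) (hBnn : ∀ ω, 0 ≤ B ω)
    (lam : ℝ) (hlam : 0 < lam) (ρ : ℝ) (hρ : ρ = lam * ∫ ω, B ω)
    (r : ℕ → ℝ) (hr0 : r 0 = 1) (hrnn : ∀ n, 0 ≤ r n)
    (hrec : ∀ n, r (n + 1) ≤ 1 - ∫ ω, Real.exp (-lam * r n * B ω)) :
    ∀ n, r n ≤ ρ ^ n := by
  have hEB : 0 ≤ ∫ ω, B ω := integral_nonneg fun ω => hBnn ω
  have hρnn : 0 ≤ ρ := by rw [hρ]; positivity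
  -- key step: r (n+1) ≤ ρ * r n
  have key : ∀ n, r (n + 1) ≤ ρ * r n := by
    intro n
    have hexp_int : Integrable (fun ω => Real.exp (-lam * r n * B ω)) := by
      apply Integrable.mono' (integrable_const 1)
        ((Real.continuous_exp.comp (continuous_const.mul continuous_id)).aestronglyMeasurable.comp_aemeasurable
          hBint.aemeasurable)
      filter_upwards with ω
      simp only [Function.comp_apply, id]
      rw [Real.norm_eq_abs, abs_of_pos (Real.exp_pos _)]
      apply Real.exp_le_one_iff.2
      have : 0 ≤ lam * r n * B ω :=
        mul_nonneg (mul_nonneg hlam.le (hrnn n)) (hBnn ω)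
      simp only [Pi.mul_apply, id]
      linarith
    have hlower : (1 : ℝ) - lam * r n * ∫ ω, B ω ≤ ∫ ω, Real.exp (-lam * r n * B ω) := by
      have : ∀ ω, 1 - lam * r n * B ω ≤ Real.exp (-lam * r n * B ω) := by
        intro ω
        have := Real.add_one_le_exp (-lam * r n * B ω)
        linarith
      calc (1:ℝ) - lam * r n * ∫ ω, B ω
          = ∫ ω, (1 - lam * r n * B ω) := by
            rw [integral_sub (integrable_const 1) (by exact (hBint.const_mul _))]
            rw [MeasureTheory.integral_const_mul]
            simp
        _ ≤ ∫ ω, Real.exp (-lam * r n * B ω) :=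
            integral_mono (by exact (integrable_const 1).sub (hBint.const_mul _)) hexp_int this
    have := hrec n
    have : r (n + 1) ≤ lam * r n * ∫ ω, B ω := by linarith
    calc r (n + 1) ≤ lam * r n * ∫ ω, B ω := this
      _ = ρ * r n := by rw [hρ]; ring
  intro n
  induction n with
  | zero => simp [hr0]
  | succ k ih =>
    calc r (k + 1) ≤ ρ * r k := key k
      _ ≤ ρ * ρ ^ k := by exact mul_le_mul_of_nonneg_left ih hρnn
      _ = ρ ^ (k + 1) := by ring
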